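/- (Rubei) Let n, r be natural numbers with r ≤ n. Then every nonempty affine subspace S of the real symmetric n×n matrices such that every matrix in S has rank r has dimension at most ⌊r/2⌋·(n − ⌊r/2⌋). -/

import Mathlib

open Matrix BigOperators
set_option linter.unusedSectionVars false
set_option maxHeartbeats 800000

namespace Rubei
variable {ι : Type*} [Fintype ι] [DecidableEq ι]

def qf (M : Matrix ι ι ℝ) (x : ι → ℝ) : ℝ := x ⬝ᵥ (M *ᵥ x)

def NegOn (M : Matrix ι ι ℝ) (V : Submodule ℝ (ι → ℝ)) : Prop :=
  ∀ x ∈ V, x ≠ 0 → qf M x < 0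

def PosOn (M : Matrix ι ι ℝ) (V : Submodule ℝ (ι → ℝ)) : Prop :=
  ∀ x ∈ V, x ≠ 0 → 0 < qf M x

def NonnegOn (M : Matrix ι ι ℝ) (V : Submodule ℝ (ι → ℝ)) : Prop :=
  ∀ x ∈ V, 0 ≤ qf M x

def NonposOn (M : Matrix ι ι ℝ) (V : Submodule ℝ (ι → ℝ)) : Prop :=
  ∀ x ∈ V, qf M x ≤ 0

lemma dotProduct_sum' {κ : Type*} [Fintype κ] (v : ι → ℝ) (f : κ → ι → ℝ) :
    v ⬝ᵥ (∑ i, f i) = ∑ i, v ⬝ᵥ f i := by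
  simp only [dotProduct, Finset.sum_apply, Finset.mul_sum]
  exact Finset.sum_comm

lemma sum_dotProduct' {κ : Type*} [Fintype κ] (f : κ → ι → ℝ) (v : ι → ℝ) :
    (∑ i, f i) ⬝ᵥ v = ∑ i, f i ⬝ᵥ v := by
  simp only [dotProduct, Finset.sum_apply, Finset.sum_mul]
  exact Finset.sum_comm

lemma mulVec_sum' {κ : Type*} [Fintype κ] (M : Matrix ι ι ℝ) (f : κ → ι → ℝ) :
    M *ᵥ (∑ i, f i) = ∑ i, M *ᵥ f i := by
  ext j
  simp only [mulVec, dotProduct_sum', Finset.sum_apply]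

lemma qf_add (M N : Matrix ι ι ℝ) (x : ι → ℝ) : qf (M + N) x = qf M x + qf N x := by
  simp [qf, add_mulVec, dotProduct_add]

lemma qf_smul (t : ℝ) (M : Matrix ι ι ℝ) (x : ι → ℝ) : qf (t • M) x = t * qf M x := by
  simp [qf, smul_mulVec, dotProduct_smul]

lemma qf_neg (M : Matrix ι ι ℝ) (x : ι → ℝ) : qf (-M) x = - qf M x := by
  simp [qf, neg_mulVec, dotProduct_neg]

lemma qf_smul_vec (M : Matrix ι ι ℝ) (a : ℝ) (x : ι → ℝ) :
    qf M (a • x) = a ^ 2 * qf M x := by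
  simp [qf, mulVec_smul, smul_dotProduct, dotProduct_smul, smul_eq_mul]; ring

lemma qf_eq_sum (M : Matrix ι ι ℝ) (x : ι → ℝ) :
    qf M x = ∑ i, ∑ j, x i * M i j * x j := by
  simp [qf, dotProduct, mulVec, Finset.mul_sum, mul_assoc]

/-- polarization: symmetric matrix with vanishing quadratic form is zero -/
lemma isSymm_qf_zero (M : Matrix ι ι ℝ) (hM : M.IsSymm) (h : ∀ x, qf M x = 0) :
    M = 0 := by
  have hd : ∀ i, M i i = 0 := by
    intro i
    have := h (Pi.single i 1)
    simpa [qf_eq_sum, Pi.single_apply, Finset.sum_ite_eq', Finset.sum_ite_eq] using this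
  ext i j
  have := h (Pi.single i 1 + Pi.single j 1)
  rw [qf_eq_sum] at this
  simp only [Pi.add_apply, Pi.single_apply] at this
  rcases eq_or_ne i j with rfl | hij
  · simpa using hd i
  · have hMji : M j i = M i j := by
      have := congrFun (congrFun hM i) j
      simpa [Matrix.IsSymm, Matrix.transpose_apply] using this
    have : ∑ k, ∑ l, ((if k = i then (1:ℝ) else 0) + if k = j then 1 else 0) * M k l *
        ((if l = i then (1:ℝ) else 0) + if l = j then 1 else 0) = 0 := by
      simpa using this
    simp only [add_mul, mul_add, ite_mul, one_mul, zero_mul, mul_ite, mul_one, mul_zero,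
      Finset.sum_add_distrib, Finset.sum_ite_eq', Finset.mem_univ, if_true] at this
    rw [hd i, hd j, hMji] at this
    simp at this
    simpa using this

lemma coeff_zero_of_linear_nonpos {a b : ℝ} (h : ∀ t : ℝ, a + t * b ≤ 0) : b = 0 := by
  by_contra hb
  have := h ((1 - a) / b)
  rw [div_mul_cancel₀ _ hb] at this
  linarith


lemma linearIndependent_of_dot {κ : Type*} [Fintype κ] [DecidableEq κ] (v : κ → (ι → ℝ))
    (h : ∀ a b, v a ⬝ᵥ v b = if a = b then 1 else 0) : LinearIndependent ℝ v := by
  rw [Fintype.linearIndependent_iff]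
  intro g hg b
  have h2 := congrArg (fun y => v b ⬝ᵥ y) hg
  simp only [dotProduct_sum', dotProduct_smul, h, smul_eq_mul, mul_ite, mul_one, mul_zero,
    Finset.sum_ite_eq', Finset.mem_univ, if_true, dotProduct_zero] at h2
  simpa [eq_comm] using h2

/-- master spectral subspace lemma -/
lemma spec_subspace (M : Matrix ι ι ℝ) (hM : M.IsHermitian) (Q : ℝ → Prop) [DecidablePred Q] :
    ∃ V : Submodule ℝ (ι → ℝ),
      Module.finrank ℝ V = Fintype.card {i // Q (hM.eigenvalues i)} ∧
      ∀ x ∈ V, ∃ c : {i // Q (hM.eigenvalues i)} → ℝ,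
        (x = ∑ i, c i • (fun j => hM.eigenvectorBasis i.1 j)) ∧
        qf M x = ∑ i, hM.eigenvalues i.1 * c i ^ 2 := by
  classical
  set v : {i // Q (hM.eigenvalues i)} → (ι → ℝ) :=
    fun i => (fun j => hM.eigenvectorBasis i.1 j) with hv
  have dv : ∀ a b : ι, (fun j => hM.eigenvectorBasis a j) ⬝ᵥ (fun j => hM.eigenvectorBasis b j)
      = if a = b then 1 else 0 := by
    intro a b
    have := orthonormal_iff_ite.mp hM.eigenvectorBasis.orthonormal a b
    rw [← this]
    simp [PiLp.inner_apply, dotProduct, RCLike.inner_apply, starRingEnd_apply]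
    exact Finset.sum_congr rfl fun _ _ => mul_comm _ _
  have dvv : ∀ a b, v a ⬝ᵥ v b = if a = b then 1 else 0 := by
    intro a b
    rw [hv]
    simp only []
    rw [dv a.1 b.1]
    by_cases hab : a = b
    · simp [hab]
    · have : (a : ι) ≠ b := fun hc => hab (Subtype.ext hc)
      simp [hab, this]
  have hli : LinearIndependent ℝ v := linearIndependent_of_dot v dvv
  refine ⟨Submodule.span ℝ (Set.range v), ?_, ?_⟩
  · rw [finrank_span_eq_card hli, Fintype.card]
  · intro x hx
    rw [Finsupp.mem_span_range_iff_exists_finsupp] at hx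
    obtain ⟨c, hc⟩ := hx
    refine ⟨c, ?_, ?_⟩
    · rw [← hc, Finsupp.sum_fintype _ _ (fun i => zero_smul ℝ (v i))]
    · have hx' : x = ∑ i, c i • v i := by
        rw [← hc, Finsupp.sum_fintype _ _ (fun i => zero_smul ℝ (v i))]
      have hMv : ∀ i : {i // Q (hM.eigenvalues i)}, M *ᵥ v i = hM.eigenvalues i.1 • v i := by
        intro i
        have := hM.mulVec_eigenvectorBasis i.1
        exact this
      have hMx : M *ᵥ x = ∑ i, (c i * hM.eigenvalues i.1) • v i := by
        rw [hx', mulVec_sum']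
        refine Finset.sum_congr rfl fun i _ => ?_
        rw [mulVec_smul, hMv i, smul_smul]
      rw [qf, hMx, hx', sum_dotProduct']
      simp only [smul_dotProduct, dotProduct_sum', dotProduct_smul, dvv, smul_eq_mul,
        mul_ite, mul_one, mul_zero, Finset.sum_ite_eq, Finset.sum_ite_eq', Finset.mem_univ, if_true]
      refine Finset.sum_congr rfl fun i _ => ?_
      ring

/-- number of negative eigenvalues -/
noncomputable def negCard {M : Matrix ι ι ℝ} (hM : M.IsHermitian) : ℕ :=
  Fintype.card {i // hM.eigenvalues i < 0}

/-- number of positive eigenvalues -/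
noncomputable def posCard {M : Matrix ι ι ℝ} (hM : M.IsHermitian) : ℕ :=
  Fintype.card {i // 0 < hM.eigenvalues i}

lemma exists_index_ne_zero {κ : Type*} [Fintype κ] {c : κ → ℝ}
    {v : κ → ι → ℝ} {x : ι → ℝ} (hx : x = ∑ i, c i • v i) (hx0 : x ≠ 0) :
    ∃ i, c i ≠ 0 := by
  by_contra h
  push_neg at h
  apply hx0
  rw [hx]
  simp [h]

lemma spec_neg (M : Matrix ι ι ℝ) (hM : M.IsHermitian) :
    ∃ V : Submodule ℝ (ι → ℝ), Module.finrank ℝ V = negCard hM ∧ NegOn M V := by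
  obtain ⟨V, hdim, hrep⟩ := spec_subspace M hM (fun l => l < 0)
  refine ⟨V, hdim, fun x hx hx0 => ?_⟩
  obtain ⟨c, hxc, hq⟩ := hrep x hx
  obtain ⟨i0, hi0⟩ := exists_index_ne_zero hxc hx0
  rw [hq]
  have : 0 < ∑ i : {i // hM.eigenvalues i < 0}, -(hM.eigenvalues i.1 * c i ^ 2) := by
    refine Finset.sum_pos' (fun i _ => ?_) ⟨i0, Finset.mem_univ _, ?_⟩
    · nlinarith [i.2, sq_nonneg (c i)]
    · nlinarith [i0.2, pow_pos (abs_pos.mpr hi0) 2, sq_abs (c i0)]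
  have h2 : ∑ i : {i // hM.eigenvalues i < 0}, -(hM.eigenvalues i.1 * c i ^ 2)
      = -∑ i : {i // hM.eigenvalues i < 0}, hM.eigenvalues i.1 * c i ^ 2 := by
    rw [Finset.sum_neg_distrib]
  rw [h2] at this
  linarith

lemma spec_pos (M : Matrix ι ι ℝ) (hM : M.IsHermitian) :
    ∃ V : Submodule ℝ (ι → ℝ), Module.finrank ℝ V = posCard hM ∧ PosOn M V := by
  obtain ⟨V, hdim, hrep⟩ := spec_subspace M hM (fun l => 0 < l)
  refine ⟨V, hdim, fun x hx hx0 => ?_⟩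
  obtain ⟨c, hxc, hq⟩ := hrep x hx
  obtain ⟨i0, hi0⟩ := exists_index_ne_zero hxc hx0
  rw [hq]
  refine Finset.sum_pos' (fun i _ => ?_) ⟨i0, Finset.mem_univ _, ?_⟩
  · nlinarith [i.2, sq_nonneg (c i)]
  · nlinarith [i0.2, pow_pos (abs_pos.mpr hi0) 2, sq_abs (c i0)]

lemma spec_nonneg (M : Matrix ι ι ℝ) (hM : M.IsHermitian) :
    ∃ V : Submodule ℝ (ι → ℝ),
      Module.finrank ℝ V = Fintype.card ι - negCard hM ∧ NonnegOn M V := by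
  obtain ⟨V, hdim, hrep⟩ := spec_subspace M hM (fun l => ¬ l < 0)
  refine ⟨V, ?_, fun x hx => ?_⟩
  · rw [hdim, negCard, Fintype.card_subtype_compl]
  · obtain ⟨c, hxc, hq⟩ := hrep x hx
    rw [hq]
    refine Finset.sum_nonneg fun i _ => ?_
    have := i.2
    push_neg at this
    nlinarith [sq_nonneg (c i)]

lemma spec_nonpos (M : Matrix ι ι ℝ) (hM : M.IsHermitian) :
    ∃ V : Submodule ℝ (ι → ℝ),
      Module.finrank ℝ V = Fintype.card ι - posCard hM ∧ NonposOn M V := by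
  obtain ⟨V, hdim, hrep⟩ := spec_subspace M hM (fun l => ¬ 0 < l)
  refine ⟨V, ?_, fun x hx => ?_⟩
  · rw [hdim, posCard, Fintype.card_subtype_compl]
  · obtain ⟨c, hxc, hq⟩ := hrep x hx
    rw [hq]
    refine Finset.sum_nonpos fun i _ => ?_
    have := i.2
    push_neg at this
    nlinarith [sq_nonneg (c i)]

lemma finrank_add_le_of_neg_nonneg {M : Matrix ι ι ℝ} {V V' : Submodule ℝ (ι → ℝ)}
    (h : NegOn M V) (h' : NonnegOn M V') :
    Module.finrank ℝ V + Module.finrank ℝ V' ≤ Fintype.card ι := by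
  have hd : V ⊓ V' = ⊥ := by
    rw [Submodule.eq_bot_iff]
    intro x hx
    by_contra hx0
    exact absurd (h' x hx.2) (not_le.mpr (h x hx.1 hx0))
  calc Module.finrank ℝ V + Module.finrank ℝ V'
      = Module.finrank ℝ ↥(V ⊔ V') + Module.finrank ℝ ↥(V ⊓ V') :=
        (Submodule.finrank_sup_add_finrank_inf_eq V V').symm
    _ = Module.finrank ℝ ↥(V ⊔ V') := by rw [hd]; simp
    _ ≤ Module.finrank ℝ (ι → ℝ) := Submodule.finrank_le _
    _ = Fintype.card ι := Module.finrank_fintype_fun_eq_card ℝ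

lemma finrank_add_le_of_pos_nonpos {M : Matrix ι ι ℝ} {V V' : Submodule ℝ (ι → ℝ)}
    (h : PosOn M V) (h' : NonposOn M V') :
    Module.finrank ℝ V + Module.finrank ℝ V' ≤ Fintype.card ι := by
  have hd : V ⊓ V' = ⊥ := by
    rw [Submodule.eq_bot_iff]
    intro x hx
    by_contra hx0
    exact absurd (h' x hx.2) (not_le.mpr (h x hx.1 hx0))
  calc Module.finrank ℝ V + Module.finrank ℝ V'
      = Module.finrank ℝ ↥(V ⊔ V') + Module.finrank ℝ ↥(V ⊓ V') :=
        (Submodule.finrank_sup_add_finrank_inf_eq V V').symm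
    _ = Module.finrank ℝ ↥(V ⊔ V') := by rw [hd]; simp
    _ ≤ Module.finrank ℝ (ι → ℝ) := Submodule.finrank_le _
    _ = Fintype.card ι := Module.finrank_fintype_fun_eq_card ℝ

lemma negCard_le_card {M : Matrix ι ι ℝ} (hM : M.IsHermitian) :
    negCard hM ≤ Fintype.card ι := Fintype.card_subtype_le _

lemma posCard_le_card {M : Matrix ι ι ℝ} (hM : M.IsHermitian) :
    posCard hM ≤ Fintype.card ι := Fintype.card_subtype_le _

lemma negOn_finrank_le {M : Matrix ι ι ℝ} (hM : M.IsHermitian) {V : Submodule ℝ (ι → ℝ)}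
    (h : NegOn M V) : Module.finrank ℝ V ≤ negCard hM := by
  obtain ⟨V', hdim, hV'⟩ := spec_nonneg M hM
  have := finrank_add_le_of_neg_nonneg h hV'
  rw [hdim] at this
  have := negCard_le_card hM
  omega

lemma posOn_finrank_le {M : Matrix ι ι ℝ} (hM : M.IsHermitian) {V : Submodule ℝ (ι → ℝ)}
    (h : PosOn M V) : Module.finrank ℝ V ≤ posCard hM := by
  obtain ⟨V', hdim, hV'⟩ := spec_nonpos M hM
  have := finrank_add_le_of_pos_nonpos h hV'
  rw [hdim] at this
  have := posCard_le_card hM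
  omega

/-- characterization of the negative index -/
lemma negCard_eq {M : Matrix ι ι ℝ} (hM : M.IsHermitian) {V V' : Submodule ℝ (ι → ℝ)}
    (hV : NegOn M V) (hV' : NonnegOn M V')
    (hsum : Module.finrank ℝ V + Module.finrank ℝ V' = Fintype.card ι) :
    negCard hM = Module.finrank ℝ V := by
  refine le_antisymm ?_ (negOn_finrank_le hM hV)
  obtain ⟨Vn, hdim, hVn⟩ := spec_neg M hM
  have := finrank_add_le_of_neg_nonneg hVn hV'
  omega

lemma posCard_eq {M : Matrix ι ι ℝ} (hM : M.IsHermitian) {V V' : Submodule ℝ (ι → ℝ)}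
    (hV : PosOn M V) (hV' : NonposOn M V')
    (hsum : Module.finrank ℝ V + Module.finrank ℝ V' = Fintype.card ι) :
    posCard hM = Module.finrank ℝ V := by
  refine le_antisymm ?_ (posOn_finrank_le hM hV)
  obtain ⟨Vp, hdim, hVp⟩ := spec_pos M hM
  have := finrank_add_le_of_pos_nonpos hVp hV'
  omega

/-- rank equals number of negative plus positive eigenvalues -/
lemma rank_eq_negCard_add_posCard {M : Matrix ι ι ℝ} (hM : M.IsHermitian) :
    M.rank = negCard hM + posCard hM := by
  rw [hM.rank_eq_card_non_zero_eigs, negCard, posCard]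
  rw [Fintype.card_subtype, Fintype.card_subtype, Fintype.card_subtype]
  have hdisj : Disjoint (Finset.filter (fun i => hM.eigenvalues i < 0) Finset.univ)
      (Finset.filter (fun i => 0 < hM.eigenvalues i) Finset.univ) := by
    rw [Finset.disjoint_left]
    intro a ha hb
    simp only [Finset.mem_filter] at ha hb
    linarith [ha.2, hb.2]
  rw [← Finset.card_union_of_disjoint hdisj, ← Finset.filter_or]
  congr 1
  apply Finset.filter_congr
  intro i _
  exact Iff.intro (fun h => lt_or_gt_of_ne h) (fun h => h.elim ne_of_lt ne_of_gt)

lemma continuous_qf (M : Matrix ι ι ℝ) : Continuous (qf M) := by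
  have : qf M = fun x => ∑ i, ∑ j, x i * M i j * x j := funext (qf_eq_sum M)
  rw [this]
  refine continuous_finset_sum _ fun i _ => continuous_finset_sum _ fun j _ => ?_
  exact ((continuous_apply i).mul continuous_const).mul (continuous_apply j)

lemma qf_abs_le (D : Matrix ι ι ℝ) {u : ι → ℝ} (hu : ∀ i, |u i| ≤ 1) :
    |qf D u| ≤ ∑ i, ∑ j, |D i j| := by
  rw [qf_eq_sum]
  calc |∑ i, ∑ j, u i * D i j * u j| ≤ ∑ i, |∑ j, u i * D i j * u j| :=
        Finset.abs_sum_le_sum_abs _ _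
    _ ≤ ∑ i, ∑ j, |u i * D i j * u j| :=
        Finset.sum_le_sum fun i _ => Finset.abs_sum_le_sum_abs _ _
    _ ≤ ∑ i, ∑ j, |D i j| := by
        refine Finset.sum_le_sum fun i _ => Finset.sum_le_sum fun j _ => ?_
        rw [abs_mul, abs_mul]
        calc |u i| * |D i j| * |u j| ≤ 1 * |D i j| * 1 := by
              apply mul_le_mul (mul_le_mul (hu i) le_rfl (abs_nonneg _) zero_le_one) (hu j)
                (abs_nonneg _)
              positivity
          _ = |D i j| := by ring

lemma negOn_perturb {C : Matrix ι ι ℝ} (D : Matrix ι ι ℝ) {V : Submodule ℝ (ι → ℝ)}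
    (h : NegOn C V) :
    ∃ ε > 0, ∀ t : ℝ, |t| < ε → NegOn (C + t • D) V := by
  rcases eq_or_ne V ⊥ with hV | hV
  · refine ⟨1, one_pos, fun t _ x hx hx0 => ?_⟩
    rw [hV, Submodule.mem_bot] at hx
    exact absurd hx hx0
  · obtain ⟨x1, hx1V, hx10⟩ := Submodule.exists_mem_ne_zero_of_ne_bot hV
    set K : Set (ι → ℝ) := (V : Set (ι → ℝ)) ∩ Metric.sphere 0 1 with hK
    have hKc : IsCompact K :=
      (isCompact_sphere (0 : ι → ℝ) 1).inter_left V.closed_of_finiteDimensional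
    have hKne : K.Nonempty := by
      refine ⟨‖x1‖⁻¹ • x1, V.smul_mem _ hx1V, ?_⟩
      rw [mem_sphere_zero_iff_norm, norm_smul, norm_inv, norm_norm,
        inv_mul_cancel₀ (norm_ne_zero_iff.mpr hx10)]
    obtain ⟨x0, hx0K, hmax⟩ := hKc.exists_isMaxOn hKne (continuous_qf C).continuousOn
    have hx0V : x0 ∈ V := hx0K.1
    have hx00 : x0 ≠ 0 := by
      intro hc
      have := hx0K.2
      rw [hc, mem_sphere_zero_iff_norm, norm_zero] at this
      exact one_ne_zero this.symm
    set lam : ℝ := -qf C x0 with hlam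
    have hlampos : 0 < lam := by
      have := h x0 hx0V hx00
      simp only [hlam]
      linarith
    set c : ℝ := ∑ i, ∑ j, |D i j| with hc
    have hc0 : 0 ≤ c :=
      Finset.sum_nonneg fun i _ => Finset.sum_nonneg fun j _ => abs_nonneg _
    refine ⟨lam / (c + 1), div_pos hlampos (by linarith), fun t ht x hx hx0 => ?_⟩
    set u : ι → ℝ := ‖x‖⁻¹ • x with hudef
    have hnx : ‖x‖ ≠ 0 := norm_ne_zero_iff.mpr hx0
    have hxu : x = ‖x‖ • u := by
      rw [hudef, smul_smul, mul_inv_cancel₀ hnx, one_smul]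
    have huV : u ∈ V := V.smul_mem _ hx
    have hu1 : ‖u‖ = 1 := by
      rw [hudef, norm_smul, norm_inv, norm_norm, inv_mul_cancel₀ hnx]
    have huK : u ∈ K := ⟨huV, by rwa [mem_sphere_zero_iff_norm]⟩
    have hCu : qf C u ≤ -lam := by
      have := hmax huK
      simpa [hlam] using this
    have hDu : |qf D u| ≤ c := by
      refine qf_abs_le D fun i => ?_
      calc |u i| = ‖u i‖ := (Real.norm_eq_abs _).symm
        _ ≤ ‖u‖ := norm_le_pi_norm u i
        _ = 1 := hu1
    have h1 : qf (C + t • D) u < 0 := by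
      rw [qf_add, qf_smul]
      have h2 : t * qf D u ≤ |t| * c := by
        calc t * qf D u ≤ |t * qf D u| := le_abs_self _
          _ = |t| * |qf D u| := abs_mul _ _
          _ ≤ |t| * c := by
              exact mul_le_mul_of_nonneg_left hDu (abs_nonneg t)
      have h3 : |t| * c < lam := by
        rcases eq_or_lt_of_le hc0 with hc' | hc'
        · rw [← hc']; simpa using hlampos
        · calc |t| * c < lam / (c + 1) * c := by
                exact mul_lt_mul_of_pos_right ht hc'
            _ < lam := by
                rw [div_mul_eq_mul_div, div_lt_iff₀ (by linarith)]
                nlinarith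
      linarith
    have h4 := qf_smul_vec (C + t • D) ‖x‖ u
    rw [← hxu] at h4
    rw [h4]
    exact mul_neg_of_pos_of_neg (by positivity) h1

lemma posOn_of_negOn_neg {M : Matrix ι ι ℝ} {V : Submodule ℝ (ι → ℝ)}
    (h : NegOn (-M) V) : PosOn M V := by
  intro x hx hx0
  have := h x hx hx0
  rw [qf_neg] at this
  linarith

lemma line_locally_const {C D : Matrix ι ι ℝ} (hs : ∀ t : ℝ, (C + t • D).IsHermitian)
    {r : ℕ} (hr : ∀ t : ℝ, (C + t • D).rank = r) (t0 : ℝ) :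
    ∃ ε > 0, ∀ t : ℝ, |t - t0| < ε →
      negCard (hs t) = negCard (hs t0) ∧ posCard (hs t) = posCard (hs t0) := by
  obtain ⟨Vn, hVndim, hVn⟩ := spec_neg _ (hs t0)
  obtain ⟨Vp, hVpdim, hVp⟩ := spec_pos _ (hs t0)
  obtain ⟨ε₁, hε₁, h₁⟩ := negOn_perturb D hVn
  have hVp' : NegOn (-(C + t0 • D)) Vp := by
    intro x hx hx0
    rw [qf_neg]
    have := hVp x hx hx0
    linarith
  obtain ⟨ε₂, hε₂, h₂⟩ := negOn_perturb (-D) hVp'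
  refine ⟨min ε₁ ε₂, lt_min hε₁ hε₂, fun t ht => ?_⟩
  have hkey : C + t • D = C + t0 • D + (t - t0) • D := by
    rw [sub_smul]; abel
  have hNeg : NegOn (C + t • D) Vn := by
    rw [hkey]
    exact h₁ (t - t0) (lt_of_lt_of_le ht (min_le_left _ _))
  have hPos : PosOn (C + t • D) Vp := by
    apply posOn_of_negOn_neg
    have := h₂ (t - t0) (lt_of_lt_of_le ht (min_le_right _ _))
    have heq : -(C + t0 • D) + (t - t0) • -D = -(C + t • D) := by
      rw [hkey, smul_neg]; abel
    rwa [heq] at this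
  have e1 : negCard (hs t0) ≤ negCard (hs t) := by
    rw [← hVndim]; exact negOn_finrank_le (hs t) hNeg
  have e2 : posCard (hs t0) ≤ posCard (hs t) := by
    rw [← hVpdim]; exact posOn_finrank_le (hs t) hPos
  have e3 := rank_eq_negCard_add_posCard (hs t)
  have e4 := rank_eq_negCard_add_posCard (hs t0)
  rw [hr t] at e3
  rw [hr t0] at e4
  omega

lemma line_const {C D : Matrix ι ι ℝ} (hs : ∀ t : ℝ, (C + t • D).IsHermitian)
    {r : ℕ} (hr : ∀ t : ℝ, (C + t • D).rank = r) (t : ℝ) :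
    negCard (hs t) = negCard (hs 0) ∧ posCard (hs t) = posCard (hs 0) := by
  set Sc : Set ℝ := {t | negCard (hs t) = negCard (hs 0) ∧ posCard (hs t) = posCard (hs 0)}
    with hSc
  have hopen : IsOpen Sc := by
    rw [Metric.isOpen_iff]
    intro t0 ht0
    obtain ⟨ε, hε, hloc⟩ := line_locally_const hs hr t0
    refine ⟨ε, hε, fun s hsmem => ?_⟩
    rw [Metric.mem_ball, Real.dist_eq] at hsmem
    obtain ⟨hn, hp⟩ := hloc s hsmem
    exact ⟨hn.trans ht0.1, hp.trans ht0.2⟩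
  have hopenc : IsOpen Scᶜ := by
    rw [Metric.isOpen_iff]
    intro t0 ht0
    obtain ⟨ε, hε, hloc⟩ := line_locally_const hs hr t0
    refine ⟨ε, hε, fun s hsmem => ?_⟩
    rw [Metric.mem_ball, Real.dist_eq] at hsmem
    obtain ⟨hn, hp⟩ := hloc s hsmem
    intro hsS
    exact ht0 ⟨hn.symm.trans hsS.1, hp.symm.trans hsS.2⟩
  have hclopen : IsClopen Sc := ⟨⟨by simpa using hopenc⟩, hopen⟩
  rcases isClopen_iff.mp hclopen with hbot | htop
  · exfalso
    have : (0 : ℝ) ∈ Sc := ⟨rfl, rfl⟩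
    rw [hbot] at this
    exact this
  · have : t ∈ Sc := by rw [htop]; trivial
    exact this

section Blocks
variable (P : ι → Prop) [DecidablePred P]

/-- restriction of a matrix to a principal submatrix given by a predicate -/
def res (M : Matrix ι ι ℝ) : Matrix {i // P i} {i // P i} ℝ :=
  M.submatrix Subtype.val Subtype.val

/-- extension of vectors by zero -/
def extv : ({i // P i} → ℝ) →ₗ[ℝ] (ι → ℝ) where
  toFun x i := if h : P i then x ⟨i, h⟩ else 0
  map_add' x y := by ext i; by_cases h : P i <;> simp [h]
  map_smul' a x := by ext i; by_cases h : P i <;> simp [h]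

lemma extv_apply_pos (x : {i // P i} → ℝ) {i : ι} (h : P i) : extv P x i = x ⟨i, h⟩ := by
  simp [extv, h]

lemma extv_apply_neg (x : {i // P i} → ℝ) {i : ι} (h : ¬ P i) : extv P x i = 0 := by
  simp [extv, h]

lemma extv_injective : Function.Injective (extv P) := by
  intro x y hxy
  ext ⟨i, hi⟩
  have := congrFun hxy i
  rwa [extv_apply_pos P x hi, extv_apply_pos P y hi] at this

lemma res_isHermitian {M : Matrix ι ι ℝ} (hM : M.IsHermitian) : (res P M).IsHermitian := by
  ext i j
  have := congrFun (congrFun hM i.1) j.1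
  simpa [res, Matrix.conjTranspose_apply, Matrix.submatrix_apply] using this

lemma res_add (M N : Matrix ι ι ℝ) : res P (M + N) = res P M + res P N := by
  ext i j; simp [res]

lemma res_smul (t : ℝ) (M : Matrix ι ι ℝ) : res P (t • M) = t • res P M := by
  ext i j; simp [res]

lemma qf_extv (M : Matrix ι ι ℝ) (x : {i // P i} → ℝ) :
    qf M (extv P x) = qf (res P M) x := by
  rw [qf_eq_sum, qf_eq_sum]
  have step : ∀ g : ι → ℝ, (∀ i, ¬ P i → g i = 0) → ∑ i, g i = ∑ i : {i // P i}, g i.1 := by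
    intro g hg
    rw [← Finset.sum_subtype (Finset.univ.filter P) (fun i => by simp) g]
    exact (Finset.sum_subset (Finset.filter_subset _ _)
      (fun i _ hi => hg i (by simpa using hi))).symm
  rw [step _ (fun i hi => by simp [extv_apply_neg P x hi])]
  refine Finset.sum_congr rfl fun i _ => ?_
  rw [step _ (fun j hj => by simp [extv_apply_neg P x hj])]
  refine Finset.sum_congr rfl fun j _ => ?_
  rw [extv_apply_pos P x i.2, extv_apply_pos P x j.2]
  simp [res]

lemma qf_zero_vec (M : Matrix ι ι ℝ) : qf M (0 : ι → ℝ) = 0 := by simp [qf]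

lemma dot_mulVec_eq_sum (M : Matrix ι ι ℝ) (x y : ι → ℝ) :
    x ⬝ᵥ (M *ᵥ y) = ∑ i, ∑ j, x i * M i j * y j := by
  simp [dotProduct, mulVec, Finset.mul_sum, mul_assoc]

lemma dot_cross_zero {M : Matrix ι ι ℝ}
    (hcross : ∀ i j, ¬ (P i ↔ P j) → M i j = 0)
    (x : {i // P i} → ℝ) (y : {i // ¬ P i} → ℝ) :
    (extv P x) ⬝ᵥ (M *ᵥ extv (fun i => ¬ P i) y) = 0 := by
  rw [dot_mulVec_eq_sum]
  refine Finset.sum_eq_zero fun i _ => Finset.sum_eq_zero fun j _ => ?_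
  by_cases hi : P i
  · by_cases hj : P j
    · rw [extv_apply_neg (fun i => ¬ P i) y (by simpa using hj), mul_zero]
    · rw [hcross i j (by simp [hi, hj]), mul_zero, zero_mul]
  · rw [extv_apply_neg P x hi, zero_mul, zero_mul]

/-- quadratic form splits over a block decomposition -/
lemma qf_split {M : Matrix ι ι ℝ} (hM : M.IsHermitian)
    (hcross : ∀ i j, ¬ (P i ↔ P j) → M i j = 0)
    (x : {i // P i} → ℝ) (y : {i // ¬ P i} → ℝ) :
    qf M (extv P x + extv (fun i => ¬ P i) y)
      = qf (res P M) x + qf (res (fun i => ¬ P i) M) y := by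
  have expand : qf M (extv P x + extv (fun i => ¬ P i) y)
      = qf M (extv P x) + qf M (extv (fun i => ¬ P i) y)
        + ((extv P x) ⬝ᵥ (M *ᵥ extv (fun i => ¬ P i) y)
           + (extv (fun i => ¬ P i) y) ⬝ᵥ (M *ᵥ extv P x)) := by
    rw [qf, qf, qf, mulVec_add, dotProduct_add, add_dotProduct, add_dotProduct]
    ring
  rw [expand, dot_cross_zero P hcross x y]
  have h2 : (extv (fun i => ¬ P i) y) ⬝ᵥ (M *ᵥ extv P x) = 0 := by
    rw [dot_mulVec_eq_sum]
    refine Finset.sum_eq_zero fun i _ => Finset.sum_eq_zero fun j _ => ?_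
    by_cases hi : P i
    · rw [extv_apply_neg (fun i => ¬ P i) y (by simpa using hi), zero_mul, zero_mul]
    · by_cases hj : P j
      · rw [hcross i j (by simp [hi, hj]), mul_zero, zero_mul]
      · rw [extv_apply_neg P x hj, mul_zero]
  rw [h2, qf_extv, qf_extv]
  ring

/-- the two extension ranges are disjoint -/
lemma extv_disjoint (V₁ : Submodule ℝ ({i // P i} → ℝ)) (V₂ : Submodule ℝ ({i // ¬ P i} → ℝ)) :
    V₁.map (extv P) ⊓ V₂.map (extv (fun i => ¬ P i)) = ⊥ := by
  rw [Submodule.eq_bot_iff]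
  rintro x ⟨⟨a, _, ha⟩, ⟨b, _, hb⟩⟩
  ext i
  by_cases hi : P i
  · rw [← hb, extv_apply_neg (fun i => ¬ P i) b (by simpa using hi)]; rfl
  · rw [← ha, extv_apply_neg P a hi]; rfl

lemma finrank_sup_ext (V₁ : Submodule ℝ ({i // P i} → ℝ)) (V₂ : Submodule ℝ ({i // ¬ P i} → ℝ)) :
    Module.finrank ℝ ↥(V₁.map (extv P) ⊔ V₂.map (extv (fun i => ¬ P i)))
      = Module.finrank ℝ V₁ + Module.finrank ℝ V₂ := by
  have h := Submodule.finrank_sup_add_finrank_inf_eq (V₁.map (extv P))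
    (V₂.map (extv (fun i => ¬ P i)))
  rw [extv_disjoint, finrank_bot, add_zero] at h
  rw [h, ← (Submodule.equivMapOfInjective _ (extv_injective P) V₁).finrank_eq,
    ← (Submodule.equivMapOfInjective _ (extv_injective (fun i => ¬ P i)) V₂).finrank_eq]

/-- membership in the sup of the two extended subspaces -/
lemma mem_sup_ext {V₁ : Submodule ℝ ({i // P i} → ℝ)} {V₂ : Submodule ℝ ({i // ¬ P i} → ℝ)}
    {x : ι → ℝ} (hx : x ∈ V₁.map (extv P) ⊔ V₂.map (extv (fun i => ¬ P i))) :
    ∃ a ∈ V₁, ∃ b ∈ V₂, x = extv P a + extv (fun i => ¬ P i) b := by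
  rw [Submodule.mem_sup] at hx
  obtain ⟨y, hy, z, hz, rfl⟩ := hx
  obtain ⟨a, ha, rfl⟩ := hy
  obtain ⟨b, hb, rfl⟩ := hz
  exact ⟨a, ha, b, hb, rfl⟩

/-- negative index is additive over block decompositions -/
lemma blk_negCard {M : Matrix ι ι ℝ} (hM : M.IsHermitian)
    (hcross : ∀ i j, ¬ (P i ↔ P j) → M i j = 0) :
    negCard hM = negCard (res_isHermitian P hM) +
      negCard (res_isHermitian (fun i => ¬ P i) hM) := by
  obtain ⟨V₁, hV₁dim, hV₁⟩ := spec_neg _ (res_isHermitian P hM)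
  obtain ⟨V₂, hV₂dim, hV₂⟩ := spec_neg _ (res_isHermitian (fun i => ¬ P i) hM)
  obtain ⟨W₁, hW₁dim, hW₁⟩ := spec_nonneg _ (res_isHermitian P hM)
  obtain ⟨W₂, hW₂dim, hW₂⟩ := spec_nonneg _ (res_isHermitian (fun i => ¬ P i) hM)
  have hsplit := qf_split P hM hcross
  have hNeg : NegOn M (V₁.map (extv P) ⊔ V₂.map (extv (fun i => ¬ P i))) := by
    intro x hx hx0
    obtain ⟨a, ha, b, hb, rfl⟩ := mem_sup_ext P hx
    rw [hsplit a b]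
    have hab : a ≠ 0 ∨ b ≠ 0 := by
      by_contra hc
      push_neg at hc
      apply hx0
      rw [hc.1, hc.2, map_zero, map_zero, add_zero]
    have hqa : qf (res P M) a ≤ 0 := by
      rcases eq_or_ne a 0 with rfl | ha0
      · rw [qf_zero_vec]
      · exact (hV₁ a ha ha0).le
    have hqb : qf (res (fun i => ¬ P i) M) b ≤ 0 := by
      rcases eq_or_ne b 0 with rfl | hb0
      · rw [qf_zero_vec]
      · exact (hV₂ b hb hb0).le
    rcases hab with ha0 | hb0
    · have := hV₁ a ha ha0; linarith
    · have := hV₂ b hb hb0; linarith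
  have hNonneg : NonnegOn M (W₁.map (extv P) ⊔ W₂.map (extv (fun i => ¬ P i))) := by
    intro x hx
    obtain ⟨a, ha, b, hb, rfl⟩ := mem_sup_ext P hx
    rw [hsplit a b]
    have := hW₁ a ha
    have := hW₂ b hb
    linarith
  have hcard : Fintype.card {i // P i} + Fintype.card {i // ¬ P i} = Fintype.card ι := by
    rw [Fintype.card_subtype_compl]
    have := Fintype.card_subtype_le P
    omega
  have h1 := negCard_le_card (res_isHermitian P hM)
  have h2 := negCard_le_card (res_isHermitian (fun i => ¬ P i) hM)
  have hbeta : Fintype.card {i // (fun i => ¬ P i) i} = Fintype.card {i // ¬ P i} := rfl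
  have := negCard_eq hM hNeg hNonneg (by
    rw [finrank_sup_ext, finrank_sup_ext, hV₁dim, hV₂dim, hW₁dim, hW₂dim]
    omega)
  rw [this, finrank_sup_ext, hV₁dim, hV₂dim]

/-- positive index is additive over block decompositions -/
lemma blk_posCard {M : Matrix ι ι ℝ} (hM : M.IsHermitian)
    (hcross : ∀ i j, ¬ (P i ↔ P j) → M i j = 0) :
    posCard hM = posCard (res_isHermitian P hM) +
      posCard (res_isHermitian (fun i => ¬ P i) hM) := by
  obtain ⟨V₁, hV₁dim, hV₁⟩ := spec_pos _ (res_isHermitian P hM)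
  obtain ⟨V₂, hV₂dim, hV₂⟩ := spec_pos _ (res_isHermitian (fun i => ¬ P i) hM)
  obtain ⟨W₁, hW₁dim, hW₁⟩ := spec_nonpos _ (res_isHermitian P hM)
  obtain ⟨W₂, hW₂dim, hW₂⟩ := spec_nonpos _ (res_isHermitian (fun i => ¬ P i) hM)
  have hsplit := qf_split P hM hcross
  have hPos : PosOn M (V₁.map (extv P) ⊔ V₂.map (extv (fun i => ¬ P i))) := by
    intro x hx hx0
    obtain ⟨a, ha, b, hb, rfl⟩ := mem_sup_ext P hx
    rw [hsplit a b]
    have hab : a ≠ 0 ∨ b ≠ 0 := by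
      by_contra hc
      push_neg at hc
      apply hx0
      rw [hc.1, hc.2, map_zero, map_zero, add_zero]
    have hqa : 0 ≤ qf (res P M) a := by
      rcases eq_or_ne a 0 with rfl | ha0
      · rw [qf_zero_vec]
      · exact (hV₁ a ha ha0).le
    have hqb : 0 ≤ qf (res (fun i => ¬ P i) M) b := by
      rcases eq_or_ne b 0 with rfl | hb0
      · rw [qf_zero_vec]
      · exact (hV₂ b hb hb0).le
    rcases hab with ha0 | hb0
    · have := hV₁ a ha ha0; linarith
    · have := hV₂ b hb hb0; linarith
  have hNonpos : NonposOn M (W₁.map (extv P) ⊔ W₂.map (extv (fun i => ¬ P i))) := by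
    intro x hx
    obtain ⟨a, ha, b, hb, rfl⟩ := mem_sup_ext P hx
    rw [hsplit a b]
    have := hW₁ a ha
    have := hW₂ b hb
    linarith
  have hcard : Fintype.card {i // P i} + Fintype.card {i // ¬ P i} = Fintype.card ι := by
    rw [Fintype.card_subtype_compl]
    have := Fintype.card_subtype_le P
    omega
  have h1 := posCard_le_card (res_isHermitian P hM)
  have h2 := posCard_le_card (res_isHermitian (fun i => ¬ P i) hM)
  have hbeta : Fintype.card {i // (fun i => ¬ P i) i} = Fintype.card {i // ¬ P i} := rfl
  have := posCard_eq hM hPos hNonpos (by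
    rw [finrank_sup_ext, finrank_sup_ext, hV₁dim, hV₂dim, hW₁dim, hW₂dim]
    omega)
  rw [this, finrank_sup_ext, hV₁dim, hV₂dim]

/-- rank is additive over block decompositions (for hermitian matrices) -/
lemma blk_rank {M : Matrix ι ι ℝ} (hM : M.IsHermitian)
    (hcross : ∀ i j, ¬ (P i ↔ P j) → M i j = 0) :
    M.rank = (res P M).rank + (res (fun i => ¬ P i) M).rank := by
  rw [rank_eq_negCard_add_posCard hM, rank_eq_negCard_add_posCard (res_isHermitian P hM),
    rank_eq_negCard_add_posCard (res_isHermitian (fun i => ¬ P i) hM),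
    blk_negCard P hM hcross, blk_posCard P hM hcross]
  ring

end Blocks

lemma sum_neg_of {f : ι → ℝ} (hle : ∀ i, f i ≤ 0) {i0 : ι} (hlt : f i0 < 0) :
    ∑ i, f i < 0 := by
  have h1 : 0 < ∑ i, -f i :=
    Finset.sum_pos' (fun i _ => by linarith [hle i]) ⟨i0, Finset.mem_univ _, by linarith⟩
  have h2 : ∑ i, -f i = -∑ i, f i := Finset.sum_neg_distrib _
  linarith

lemma qf_diagonal (d : ι → ℝ) (x : ι → ℝ) :
    qf (diagonal d) x = ∑ i, d i * x i ^ 2 := by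
  rw [qf_eq_sum]
  refine Finset.sum_congr rfl fun i _ => ?_
  rw [Finset.sum_eq_single i]
  · rw [Matrix.diagonal_apply_eq]; ring
  · intro j _ hji
    rw [Matrix.diagonal_apply_ne' _ hji, mul_zero, zero_mul]
  · intro h; exact absurd (Finset.mem_univ i) h

lemma finrank_range_extv (P : ι → Prop) [DecidablePred P] :
    Module.finrank ℝ ↥(LinearMap.range (extv P)) = Fintype.card {i // P i} := by
  rw [LinearMap.finrank_range_of_inj (extv_injective P), Module.finrank_fintype_fun_eq_card]

lemma negCard_diagonal (d : ι → ℝ) (h : (Matrix.diagonal d).IsHermitian) :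
    negCard h = Fintype.card {i // d i < 0} := by
  classical
  have hNeg : NegOn (diagonal d) (LinearMap.range (extv (fun i => d i < 0))) := by
    rintro x ⟨a, rfl⟩ hx0
    rw [qf_diagonal]
    have hterm : ∀ i, d i * extv (fun i => d i < 0) a i ^ 2 ≤ 0 := by
      intro i
      by_cases hi : d i < 0
      · nlinarith [sq_nonneg (extv (fun i => d i < 0) a i)]
      · rw [extv_apply_neg _ a hi]; simp
    obtain ⟨i0, hi0⟩ : ∃ i, extv (fun i => d i < 0) a i ≠ 0 := by
      by_contra hc
      push_neg at hc
      exact hx0 (funext hc)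
    have hPi0 : d i0 < 0 := by
      by_contra hc
      exact hi0 (extv_apply_neg _ a hc)
    refine sum_neg_of hterm (i0 := i0) ?_
    nlinarith [pow_pos (abs_pos.mpr hi0) 2, sq_abs (extv (fun i => d i < 0) a i0)]
  have hNonneg : NonnegOn (diagonal d) (LinearMap.range (extv (fun i => ¬ d i < 0))) := by
    rintro x ⟨a, rfl⟩
    rw [qf_diagonal]
    refine Finset.sum_nonneg fun i _ => ?_
    by_cases hi : d i < 0
    · rw [extv_apply_neg _ a (by simpa using hi)]; simp
    · push_neg at hi
      nlinarith [sq_nonneg (extv (fun i => ¬ d i < 0) a i)]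
  have hsum : Module.finrank ℝ ↥(LinearMap.range (extv (fun i => d i < 0)))
      + Module.finrank ℝ ↥(LinearMap.range (extv (fun i => ¬ d i < 0))) = Fintype.card ι := by
    rw [finrank_range_extv, finrank_range_extv, Fintype.card_subtype_compl]
    have := Fintype.card_subtype_le (fun i => d i < 0)
    omega
  rw [negCard_eq h hNeg hNonneg hsum, finrank_range_extv]

lemma posCard_diagonal (d : ι → ℝ) (h : (Matrix.diagonal d).IsHermitian) :
    posCard h = Fintype.card {i // 0 < d i} := by
  classical
  have hPos : PosOn (diagonal d) (LinearMap.range (extv (fun i => 0 < d i))) := by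
    rintro x ⟨a, rfl⟩ hx0
    rw [qf_diagonal]
    obtain ⟨i0, hi0⟩ : ∃ i, extv (fun i => 0 < d i) a i ≠ 0 := by
      by_contra hc
      push_neg at hc
      exact hx0 (funext hc)
    have hPi0 : 0 < d i0 := by
      by_contra hc
      exact hi0 (extv_apply_neg _ a hc)
    refine Finset.sum_pos' (fun i _ => ?_) ⟨i0, Finset.mem_univ _, ?_⟩
    · by_cases hi : 0 < d i
      · nlinarith [sq_nonneg (extv (fun i => 0 < d i) a i)]
      · rw [extv_apply_neg _ a hi]; simp
    · nlinarith [pow_pos (abs_pos.mpr hi0) 2, sq_abs (extv (fun i => 0 < d i) a i0)]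
  have hNonpos : NonposOn (diagonal d) (LinearMap.range (extv (fun i => ¬ 0 < d i))) := by
    rintro x ⟨a, rfl⟩
    rw [qf_diagonal]
    refine Finset.sum_nonpos fun i _ => ?_
    by_cases hi : 0 < d i
    · rw [extv_apply_neg _ a (by simpa using hi)]; simp
    · push_neg at hi
      nlinarith [sq_nonneg (extv (fun i => ¬ 0 < d i) a i)]
  have hsum : Module.finrank ℝ ↥(LinearMap.range (extv (fun i => 0 < d i)))
      + Module.finrank ℝ ↥(LinearMap.range (extv (fun i => ¬ 0 < d i))) = Fintype.card ι := by
    rw [finrank_range_extv, finrank_range_extv, Fintype.card_subtype_compl]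
    have := Fintype.card_subtype_le (fun i => 0 < d i)
    omega
  rw [posCard_eq h hPos hNonpos hsum, finrank_range_extv]

lemma nonpos_of_negCard_full {M : Matrix ι ι ℝ} (hM : M.IsHermitian)
    (h : negCard hM = Fintype.card ι) : ∀ x, qf M x ≤ 0 := by
  obtain ⟨V, hdim, hV⟩ := spec_neg M hM
  have hVtop : V = ⊤ := by
    apply Submodule.eq_top_of_finrank_eq
    rw [hdim, h, Module.finrank_fintype_fun_eq_card]
  intro x
  rcases eq_or_ne x 0 with rfl | hx0
  · rw [qf_zero_vec]
  · exact (hV x (hVtop ▸ Submodule.mem_top) hx0).le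

lemma nonneg_of_negCard_zero {M : Matrix ι ι ℝ} (hM : M.IsHermitian)
    (h : negCard hM = 0) : ∀ x, 0 ≤ qf M x := by
  obtain ⟨V, hdim, hV⟩ := spec_nonneg M hM
  have hVtop : V = ⊤ := by
    apply Submodule.eq_top_of_finrank_eq
    rw [hdim, h, Module.finrank_fintype_fun_eq_card, Nat.sub_zero]
  intro x
  exact hV x (hVtop ▸ Submodule.mem_top)

/-- the zero set of `t ↦ det (C + t • D)` is finite once it misses one point -/
lemma det_line_finite {C D : Matrix ι ι ℝ} {t0 : ℝ} (h : (C + t0 • D).det ≠ 0) :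
    {t : ℝ | (C + t • D).det = 0}.Finite := by
  classical
  set Pp : Polynomial ℝ :=
    (C.map Polynomial.C + (Polynomial.X : Polynomial ℝ) • D.map Polynomial.C).det with hPp
  have heval : ∀ t : ℝ, Pp.eval t = (C + t • D).det := by
    intro t
    have h1 : Pp.eval t = (Polynomial.evalRingHom t) Pp := rfl
    rw [h1, hPp, RingHom.map_det]
    congr 1
    ext i j
    simp only [RingHom.mapMatrix_apply, Matrix.map_apply, Matrix.add_apply, Matrix.smul_apply,
      smul_eq_mul, Polynomial.coe_evalRingHom, Polynomial.eval_add, Polynomial.eval_mul,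
      Polynomial.eval_C, Polynomial.eval_X]
  have hP0 : Pp ≠ 0 := by
    intro hc
    apply h
    rw [← heval t0, hc, Polynomial.eval_zero]
  refine (Polynomial.finite_setOf_isRoot hP0).subset fun t ht => ?_
  have : Pp.eval t = 0 := by rw [heval t]; exact ht
  exact this

lemma isSymm_of_isHermitian_real {M : Matrix ι ι ℝ} (h : M.IsHermitian) : M.IsSymm := by
  rwa [Matrix.IsHermitian, Matrix.conjTranspose_eq_transpose_of_trivial] at h

lemma isHermitian_of_isSymm_real {M : Matrix ι ι ℝ} (h : M.IsSymm) : M.IsHermitian := by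
  rwa [Matrix.IsHermitian, Matrix.conjTranspose_eq_transpose_of_trivial]

lemma negCard_congr {M N : Matrix ι ι ℝ} (hMN : M = N) (hM : M.IsHermitian)
    (hN : N.IsHermitian) : negCard hM = negCard hN := by subst hMN; rfl

lemma rank_le_of_det_eq_zero {M : Matrix ι ι ℝ} (h : M.det = 0) :
    M.rank + 1 ≤ Fintype.card ι := by
  obtain ⟨v, hv0, hvK⟩ := Matrix.exists_mulVec_eq_zero_iff.mpr h
  have hker : 0 < Module.finrank ℝ ↥(LinearMap.ker M.mulVecLin) := by
    rw [Module.finrank_pos_iff_exists_ne_zero]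
    refine ⟨⟨v, by rwa [LinearMap.mem_ker, Matrix.mulVecLin_apply]⟩, ?_⟩
    intro hc
    exact hv0 (congrArg Subtype.val hc)
  have hsum := LinearMap.finrank_range_add_finrank_ker M.mulVecLin
  rw [Module.finrank_fintype_fun_eq_card] at hsum
  have hrk : M.rank = Module.finrank ℝ ↥(LinearMap.range M.mulVecLin) := rfl
  omega

lemma res_diagonal (P : ι → Prop) [DecidablePred P] (d : ι → ℝ) :
    res P (diagonal d) = diagonal (fun i : {i // P i} => d i.1) := by
  ext i j
  simp [res, Matrix.diagonal_apply, Subtype.ext_iff]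

/-- lower semicontinuity of the rank along a hermitian line -/
lemma rank_lsc {C D : Matrix ι ι ℝ} (hs : ∀ t : ℝ, (C + t • D).IsHermitian) (t0 : ℝ) :
    ∃ ε > 0, ∀ t : ℝ, |t - t0| < ε → (C + t0 • D).rank ≤ (C + t • D).rank := by
  obtain ⟨Vn, hVndim, hVn⟩ := spec_neg _ (hs t0)
  obtain ⟨Vp, hVpdim, hVp⟩ := spec_pos _ (hs t0)
  obtain ⟨ε₁, hε₁, h₁⟩ := negOn_perturb D hVn
  have hVp' : NegOn (-(C + t0 • D)) Vp := by
    intro x hx hx0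
    rw [qf_neg]
    have := hVp x hx hx0
    linarith
  obtain ⟨ε₂, hε₂, h₂⟩ := negOn_perturb (-D) hVp'
  refine ⟨min ε₁ ε₂, lt_min hε₁ hε₂, fun t ht => ?_⟩
  have hkey : C + t • D = C + t0 • D + (t - t0) • D := by
    rw [sub_smul]; abel
  have hNeg : NegOn (C + t • D) Vn := by
    rw [hkey]
    exact h₁ (t - t0) (lt_of_lt_of_le ht (min_le_left _ _))
  have hPos : PosOn (C + t • D) Vp := by
    apply posOn_of_negOn_neg
    have := h₂ (t - t0) (lt_of_lt_of_le ht (min_le_right _ _))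
    have heq : -(C + t0 • D) + (t - t0) • -D = -(C + t • D) := by
      rw [hkey, smul_neg]; abel
    rwa [heq] at this
  have e1 : negCard (hs t0) ≤ negCard (hs t) := by
    rw [← hVndim]; exact negOn_finrank_le (hs t) hNeg
  have e2 : posCard (hs t0) ≤ posCard (hs t) := by
    rw [← hVpdim]; exact posOn_finrank_le (hs t) hPos
  have e3 := rank_eq_negCard_add_posCard (hs t)
  have e4 := rank_eq_negCard_add_posCard (hs t0)
  omega

/-- THE CORE LEMMA: if the off-diagonal block (negative part vs rest) of a direction
vector vanishes, the direction vector is zero. -/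
lemma core {d : ι → ℝ} {r : ℕ} {S : AffineSubspace ℝ (Matrix ι ι ℝ)}
    (hD : Matrix.diagonal d ∈ S)
    (hsym : ∀ A ∈ S, A.IsSymm)
    (hrank : ∀ A ∈ S, A.rank = r)
    {B : Matrix ι ι ℝ} (hB : B ∈ S.direction)
    (hBcross : ∀ i j, d i < 0 → ¬ d j < 0 → B i j = 0) :
    B = 0 := by
  classical
  set P : ι → Prop := fun i => d i < 0 with hP
  set q : ℕ := Fintype.card {i // P i} with hq
  -- B is a difference of elements of S, hence symmetric, and lines stay in S
  rw [AffineSubspace.mem_direction_iff_eq_vsub ⟨_, hD⟩] at hB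
  obtain ⟨M₁, hM₁, M₂, hM₂, rfl⟩ := hB
  set B : Matrix ι ι ℝ := M₁ -ᵥ M₂ with hBdef
  have hBsymm : B.IsSymm := by
    have h1 := hsym M₁ hM₁
    have h2 := hsym M₂ hM₂
    rw [hBdef]
    show (M₁ - M₂).IsSymm
    rw [Matrix.IsSymm, Matrix.transpose_sub, h1, h2]
  have hmem : ∀ t : ℝ, Matrix.diagonal d + t • B ∈ S := by
    intro t
    have := S.smul_vsub_vadd_mem t hM₁ hM₂ hD
    have heq : t • (M₁ -ᵥ M₂) +ᵥ Matrix.diagonal d = Matrix.diagonal d + t • B := by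
      rw [hBdef]
      show t • (M₁ - M₂) + Matrix.diagonal d = Matrix.diagonal d + t • (M₁ - M₂)
      rw [add_comm]
    rwa [heq] at this
  set C₀ : Matrix ι ι ℝ := Matrix.diagonal d with hC₀
  have hs : ∀ t : ℝ, (C₀ + t • B).IsHermitian :=
    fun t => isHermitian_of_isSymm_real (hsym _ (hmem t))
  have hr : ∀ t : ℝ, (C₀ + t • B).rank = r := fun t => hrank _ (hmem t)
  have hBh : B.IsHermitian := isHermitian_of_isSymm_real hBsymm
  have hBcross' : ∀ i j, ¬ (P i ↔ P j) → B i j = 0 := by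
    intro i j hij
    by_cases hi : P i
    · exact hBcross i j hi (fun hj => hij ⟨fun _ => hj, fun _ => hi⟩)
    · by_cases hj : P j
      · have := hBcross j i hj hi
        have hsymme := congrFun (congrFun hBsymm j) i
        rw [Matrix.transpose_apply] at hsymme
        rw [hsymme]
        exact this
      · exact absurd (Iff.intro (fun h => absurd h hi) (fun h => absurd h hj)) hij
  have hcrossM : ∀ t : ℝ, ∀ i j, ¬ (P i ↔ P j) → (C₀ + t • B) i j = 0 := by
    intro t i j hij
    have hBij := hBcross' i j hij
    have hij' : i ≠ j := by
      intro hc; subst hc; exact hij Iff.rfl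
    rw [Matrix.add_apply, Matrix.smul_apply, hBij, smul_zero, add_zero, hC₀,
      Matrix.diagonal_apply_ne d hij']
  have hC₀h : C₀.IsHermitian := by
    have := hs 0
    rwa [zero_smul, add_zero] at this
  -- negCard of the whole line is q
  have hnegM : ∀ t : ℝ, negCard (hs t) = q := by
    intro t
    have h0 : negCard (hs 0) = q := by
      rw [negCard_congr (by rw [zero_smul, add_zero]) (hs 0) hC₀h]
      exact negCard_diagonal d hC₀h
    rw [← h0]
    exact (line_const hs hr t).1
  -- the two blocks
  set C₁ := res P C₀ with hC₁
  set B₁ := res P B with hB₁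
  set C₂ := res (fun i => ¬ P i) C₀ with hC₂
  set B₂ := res (fun i => ¬ P i) B with hB₂
  have hYeq : ∀ t : ℝ, res P (C₀ + t • B) = C₁ + t • B₁ := by
    intro t; rw [res_add, res_smul]
  have hXeq : ∀ t : ℝ, res (fun i => ¬ P i) (C₀ + t • B) = C₂ + t • B₂ := by
    intro t; rw [res_add, res_smul]
  have hs₁ : ∀ t : ℝ, (C₁ + t • B₁).IsHermitian := by
    intro t
    rw [← hYeq t]
    exact res_isHermitian P (hs t)
  have hs₂ : ∀ t : ℝ, (C₂ + t • B₂).IsHermitian := by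
    intro t
    rw [← hXeq t]
    exact res_isHermitian (fun i => ¬ P i) (hs t)
  have hC₁diag : C₁ = diagonal (fun i : {i // P i} => d i.1) := res_diagonal P d
  have hcard₁ : Fintype.card {i // P i} = q := rfl
  -- Step C : the negative block is invertible along the whole line
  have hdet0 : (C₁ + (0:ℝ) • B₁).det ≠ 0 := by
    rw [zero_smul, add_zero, hC₁diag, Matrix.det_diagonal]
    rw [Finset.prod_ne_zero_iff]
    intro i _
    have : d i.1 < 0 := i.2
    linarith
  have hZfin := det_line_finite hdet0
  have hdet : ∀ t : ℝ, (C₁ + t • B₁).det ≠ 0 := by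
    by_contra hc
    push_neg at hc
    obtain ⟨t0, ht0⟩ := hc
    -- rank of Y at t0 drops
    have hYrank : (C₁ + t0 • B₁).rank + 1 ≤ q := by
      have := rank_le_of_det_eq_zero ht0
      rwa [hcard₁] at this
    -- rank decomposition at any t
    have hblk : ∀ t : ℝ, r = (C₁ + t • B₁).rank + (C₂ + t • B₂).rank := by
      intro t
      have := blk_rank P (hs t) (hcrossM t)
      rw [hYeq t, hXeq t] at this
      rw [← hr t, this]
    -- lower semicontinuity of the X-rank
    obtain ⟨ε, hε, hlsc⟩ := rank_lsc hs₂ t0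
    -- pick a nearby parameter where the determinant is nonzero
    obtain ⟨t1, ht1⟩ := ((Set.Ioo_infinite (by linarith : t0 - ε < t0 + ε)).diff hZfin).nonempty
    obtain ⟨⟨hlo, hhi⟩, hnotZ⟩ := ht1
    have ht1close : |t1 - t0| < ε := by
      rw [abs_sub_lt_iff]; constructor <;> linarith
    have hXmono := hlsc t1 ht1close
    have hYt1 : (C₁ + t1 • B₁).rank = q := by
      have hunit : IsUnit (C₁ + t1 • B₁) := by
        rw [Matrix.isUnit_iff_isUnit_det]
        exact isUnit_iff_ne_zero.mpr (by simpa using hnotZ)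
      rw [Matrix.rank_of_isUnit _ hunit, hcard₁]
    have e1 := hblk t0
    have e2 := hblk t1
    omega
  -- Step D : the negative block of B vanishes
  have hrY : ∀ t : ℝ, (C₁ + t • B₁).rank = q := by
    intro t
    have hunit : IsUnit (C₁ + t • B₁) := by
      rw [Matrix.isUnit_iff_isUnit_det]
      exact isUnit_iff_ne_zero.mpr (hdet t)
    rw [Matrix.rank_of_isUnit _ hunit, hcard₁]
  have hnegY : ∀ t : ℝ, negCard (hs₁ t) = q := by
    intro t
    have h0 : negCard (hs₁ 0) = q := by
      have hC₁h : C₁.IsHermitian := by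
        have := hs₁ 0; rwa [zero_smul, add_zero] at this
      rw [negCard_congr (by rw [zero_smul, add_zero]) (hs₁ 0) hC₁h,
        negCard_congr hC₁diag hC₁h (isHermitian_of_isSymm_real (by
          rw [← hC₁diag]
          exact isSymm_of_isHermitian_real hC₁h)), negCard_diagonal]
      rw [← hcard₁]
      exact Fintype.card_congr (Equiv.subtypeUnivEquiv fun x => x.2)
    rw [← h0]
    exact (line_const hs₁ hrY t).1
  have hB₁zero : B₁ = 0 := by
    have hqle : ∀ x, ∀ t : ℝ, qf C₁ x + t * qf B₁ x ≤ 0 := by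
      intro x t
      have := nonpos_of_negCard_full (hs₁ t) (by rw [hnegY t, hcard₁]) x
      rwa [qf_add, qf_smul] at this
    have hqB : ∀ x, qf B₁ x = 0 := by
      intro x
      exact coeff_zero_of_linear_nonpos (fun t => hqle x t)
    exact isSymm_qf_zero B₁ (isSymm_of_isHermitian_real (by
      have := hs₁ 1
      have hC₁h : C₁.IsHermitian := by
        have := hs₁ 0; rwa [zero_smul, add_zero] at this
      have : B₁ = (C₁ + (1:ℝ) • B₁) - C₁ := by rw [one_smul]; abel
      rw [this]
      exact Matrix.IsHermitian.sub (hs₁ 1) hC₁h)) hqB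
  -- Step E : the nonnegative block of B vanishes
  have hnegX : ∀ t : ℝ, negCard (hs₂ t) = 0 := by
    intro t
    have hb := blk_negCard P (hs t) (hcrossM t)
    have e1 : negCard (res_isHermitian P (hs t)) = negCard (hs₁ t) :=
      negCard_congr (hYeq t) _ _
    have e2 : negCard (res_isHermitian (fun i => ¬ P i) (hs t)) = negCard (hs₂ t) :=
      negCard_congr (hXeq t) _ _
    rw [e1, e2, hnegM t, hnegY t] at hb
    omega
  have hB₂zero : B₂ = 0 := by
    have hqge : ∀ x, ∀ t : ℝ, 0 ≤ qf C₂ x + t * qf B₂ x := by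
      intro x t
      have := nonneg_of_negCard_zero (hs₂ t) (hnegX t) x
      rwa [qf_add, qf_smul] at this
    have hqB : ∀ x, qf B₂ x = 0 := by
      intro x
      have := coeff_zero_of_linear_nonpos (a := -qf C₂ x) (b := -qf B₂ x)
        (fun t => by have := hqge x t; linarith [hqge x t, mul_neg t (qf B₂ x)])
      linarith
    exact isSymm_qf_zero B₂ (isSymm_of_isHermitian_real (by
      have hC₂h : C₂.IsHermitian := by
        have := hs₂ 0; rwa [zero_smul, add_zero] at this
      have : B₂ = (C₂ + (1:ℝ) • B₂) - C₂ := by rw [one_smul]; abel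
      rw [this]
      exact Matrix.IsHermitian.sub (hs₂ 1) hC₂h)) hqB
  -- Step F : conclude
  ext i j
  by_cases hi : P i
  · by_cases hj : P j
    · have := congrFun (congrFun hB₁zero ⟨i, hi⟩) ⟨j, hj⟩
      simpa [hB₁, res] using this
    · simpa using hBcross i j hi hj
  · by_cases hj : P j
    · have h1 := hBcross j i hj hi
      have hsymme := congrFun (congrFun hBsymm j) i
      rw [Matrix.transpose_apply] at hsymme
      rw [hsymme]
      exact h1
    · have := congrFun (congrFun hB₂zero ⟨i, hi⟩) ⟨j, hj⟩
      simpa [hB₂, res] using this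

/-- dimension bound for an affine subspace containing a diagonal matrix -/
lemma bound (d : ι → ℝ) {r : ℕ} {S : AffineSubspace ℝ (Matrix ι ι ℝ)}
    (hD : Matrix.diagonal d ∈ S) (hsym : ∀ A ∈ S, A.IsSymm)
    (hrank : ∀ A ∈ S, A.rank = r) :
    Module.finrank ℝ S.direction ≤
      Fintype.card {i // d i < 0} * (Fintype.card ι - Fintype.card {i // d i < 0}) := by
  classical
  set Φ : Matrix ι ι ℝ →ₗ[ℝ] ({i // d i < 0} → {i // ¬ d i < 0} → ℝ) :=
    { toFun := fun B i j => B i.1 j.1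
      map_add' := fun B C => by ext i j; simp
      map_smul' := fun a B => by ext i j; simp } with hΦ
  set f := Φ.comp S.direction.subtype with hf
  have hinj : Function.Injective f := by
    rw [← LinearMap.ker_eq_bot, LinearMap.ker_eq_bot']
    intro B hB0
    have hcross : ∀ i j, d i < 0 → ¬ d j < 0 → (B : Matrix ι ι ℝ) i j = 0 := by
      intro i j hi hj
      have h2 := congrFun (congrFun hB0 ⟨i, hi⟩) ⟨j, hj⟩
      simpa [hf, hΦ] using h2
    have := core hD hsym hrank B.2 hcross
    exact Subtype.ext this
  have hle := LinearMap.finrank_le_finrank_of_injective hinj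
  have hcod : Module.finrank ℝ ({i // d i < 0} → {i // ¬ d i < 0} → ℝ)
      = Fintype.card {i // d i < 0} * (Fintype.card ι - Fintype.card {i // d i < 0}) := by
    rw [Module.finrank_pi_fintype ℝ]
    rw [Finset.sum_congr rfl (fun i _ => Module.finrank_fintype_fun_eq_card ℝ)]
    rw [Finset.sum_const, Fintype.card_subtype_compl, smul_eq_mul]
    rfl
  rw [hcod] at hle
  exact hle

lemma rank_neg (M : Matrix ι ι ℝ) : (-M).rank = M.rank := by
  have h : (-M).mulVecLin = -M.mulVecLin := by
    ext v i
    simp [Matrix.mulVecLin_apply, Matrix.neg_mulVec]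
  rw [Matrix.rank, Matrix.rank, h, LinearMap.range_neg]

lemma natbound {a m n : ℕ} (ham : a ≤ m) (hmn : 2 * m ≤ n) :
    a * (n - a) ≤ m * (n - m) := by
  have h1 : n - a = (n - m) + (m - a) := by omega
  calc a * (n - a) = a * (n - m) + a * (m - a) := by rw [h1, Nat.mul_add]
    _ ≤ a * (n - m) + (n - m) * (m - a) :=
        Nat.add_le_add_left (Nat.mul_le_mul_right (m - a) (by omega : a ≤ n - m)) _
    _ = (a + (m - a)) * (n - m) := by ring
    _ = m * (n - m) := by congr 1; omega

end Rubei

open Rubei in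
/-- Rubei: for `r ≤ n`, every nonempty affine subspace of the real
symmetric `n × n` matrices all of whose elements have rank `r` has dimension at most
`⌊r/2⌋ * (n - ⌊r/2⌋)`. -/
theorem stmt_18 (n r : ℕ) (hrn : r ≤ n)
    (S : AffineSubspace ℝ (Matrix (Fin n) (Fin n) ℝ))
    (hne : (S : Set (Matrix (Fin n) (Fin n) ℝ)).Nonempty)
    (hsym : ∀ A ∈ S, A.IsSymm)
    (hrank : ∀ A ∈ S, A.rank = r) :
    Module.finrank ℝ S.direction ≤ (r / 2) * (n - r / 2) := by
  classical
  obtain ⟨A, hA⟩ := hne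
  have hAh : A.IsHermitian := isHermitian_of_isSymm_real (hsym A hA)
  set U : Matrix (Fin n) (Fin n) ℝ := (hAh.eigenvectorUnitary : Matrix (Fin n) (Fin n) ℝ)
    with hUdef
  have hU1 : U * star U = 1 := (Matrix.mem_unitaryGroup_iff).mp hAh.eigenvectorUnitary.2
  have hU2 : star U * U = 1 := (Matrix.mem_unitaryGroup_iff').mp hAh.eigenvectorUnitary.2
  -- conjugation linear equivalence
  set g : Matrix (Fin n) (Fin n) ℝ ≃ₗ[ℝ] Matrix (Fin n) (Fin n) ℝ :=
    { toFun := fun M => star U * M * U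
      invFun := fun N => U * N * star U
      map_add' := fun M N => by noncomm_ring
      map_smul' := fun a M => by simp [Matrix.mul_smul, Matrix.smul_mul]
      left_inv := fun M => by
        show U * (star U * M * U) * star U = M
        have h : U * (star U * M * U) * star U = (U * star U) * M * (U * star U) := by
          noncomm_ring
        rw [h, hU1, one_mul, mul_one]
      right_inv := fun N => by
        show star U * (U * N * star U) * U = N
        have h : star U * (U * N * star U) * U = (star U * U) * N * (star U * U) := by
          noncomm_ring
        rw [h, hU2, one_mul, mul_one] } with hgdef
  -- transported affine subspace
  set S' := S.map (g.toLinearMap.toAffineMap) with hS'def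
  have hmem' : ∀ A' ∈ S', ∃ M ∈ S, star U * M * U = A' := by
    intro A' hA'
    rw [hS'def, AffineSubspace.mem_map] at hA'
    obtain ⟨M, hM, hMA⟩ := hA'
    exact ⟨M, hM, hMA⟩
  have hstarU : star U = Uᵀ := Matrix.conjTranspose_eq_transpose_of_trivial U
  have hsym' : ∀ A' ∈ S', A'.IsSymm := by
    intro A' hA'
    obtain ⟨M, hM, rfl⟩ := hmem' A' hA'
    have hMsymm := hsym M hM
    rw [Matrix.IsSymm, Matrix.transpose_mul, Matrix.transpose_mul, hstarU,
      Matrix.transpose_transpose, hMsymm, ← Matrix.mul_assoc]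
  have hrank' : ∀ A' ∈ S', A'.rank = r := by
    intro A' hA'
    obtain ⟨M, hM, rfl⟩ := hmem' A' hA'
    have hle1 : (star U * M * U).rank ≤ M.rank := by
      calc (star U * M * U).rank ≤ (star U * M).rank := Matrix.rank_mul_le_left _ _
        _ ≤ M.rank := Matrix.rank_mul_le_right _ _
    have hback : U * (star U * M * U) * star U = M := by
      have h : U * (star U * M * U) * star U = (U * star U) * M * (U * star U) := by
        noncomm_ring
      rw [h, hU1, one_mul, mul_one]
    have hle2 : M.rank ≤ (star U * M * U).rank := by
      conv_lhs => rw [← hback]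
      calc (U * (star U * M * U) * star U).rank
          ≤ (U * (star U * M * U)).rank := Matrix.rank_mul_le_left _ _
        _ ≤ (star U * M * U).rank := Matrix.rank_mul_le_right _ _
    rw [← hrank M hM]
    omega
  -- the diagonal matrix of eigenvalues belongs to S'
  set d : Fin n → ℝ := hAh.eigenvalues with hd
  have hDmem : Matrix.diagonal d ∈ S' := by
    rw [hS'def, AffineSubspace.mem_map]
    refine ⟨A, hA, ?_⟩
    have := hAh.conjStarAlgAut_star_eigenvectorUnitary
    rw [Unitary.conjStarAlgAut_star_apply, RCLike.ofReal_real_eq_id] at this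
    exact this
  -- direction dimensions agree
  have hdir : Module.finrank ℝ S'.direction = Module.finrank ℝ S.direction := by
    rw [hS'def, AffineSubspace.map_direction, LinearMap.toAffineMap_linear]
    exact LinearEquiv.finrank_map_eq g S.direction
  -- first bound
  have hb1 := Rubei.bound d hDmem hsym' hrank'
  -- negated subspace
  set S'' := S'.map ((LinearEquiv.neg ℝ).toLinearMap.toAffineMap) with hS''def
  have hmem'' : ∀ A'' ∈ S'', ∃ M ∈ S', -M = A'' := by
    intro A'' hA''
    rw [hS''def, AffineSubspace.mem_map] at hA''
    obtain ⟨M, hM, hMA⟩ := hA''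
    exact ⟨M, hM, hMA⟩
  have hsym'' : ∀ A'' ∈ S'', A''.IsSymm := by
    intro A'' hA''
    obtain ⟨M, hM, rfl⟩ := hmem'' A'' hA''
    have := hsym' M hM
    rw [Matrix.IsSymm, Matrix.transpose_neg, this]
  have hrank'' : ∀ A'' ∈ S'', A''.rank = r := by
    intro A'' hA''
    obtain ⟨M, hM, rfl⟩ := hmem'' A'' hA''
    rw [rank_neg]
    exact hrank' M hM
  have hDmem'' : Matrix.diagonal (fun i => -d i) ∈ S'' := by
    rw [hS''def, AffineSubspace.mem_map]
    refine ⟨Matrix.diagonal d, hDmem, ?_⟩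
    simp [Matrix.diagonal_neg]
  have hdir'' : Module.finrank ℝ S''.direction = Module.finrank ℝ S.direction := by
    rw [hS''def, AffineSubspace.map_direction, LinearMap.toAffineMap_linear,
      LinearEquiv.finrank_map_eq (LinearEquiv.neg ℝ) S'.direction]
    exact hdir
  have hb2 := Rubei.bound (fun i => -d i) hDmem'' hsym'' hrank''
  -- identify the two cardinalities
  set a : ℕ := Fintype.card {i // d i < 0} with ha
  set b : ℕ := Fintype.card {i // 0 < d i} with hb
  have hcardneg : Fintype.card {i // (fun i => -d i) i < 0} = b := by
    refine Fintype.card_congr (Equiv.subtypeEquivRight fun i => ?_)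
    simp
  have habr : a + b = r := by
    have := rank_eq_negCard_add_posCard hAh
    rw [hrank A hA] at this
    exact this.symm
  rw [hdir, Fintype.card_fin] at hb1
  rw [hdir'', Fintype.card_fin, hcardneg] at hb2
  -- conclude by arithmetic
  have hmn : 2 * (r / 2) ≤ n := by omega
  rcases le_total a b with hab | hab
  · have ham : a ≤ r / 2 := by omega
    exact hb1.trans (natbound ham hmn)
  · have hbm : b ≤ r / 2 := by omega
    exact hb2.trans (natbound hbm hmn)
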